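/- arXiv:2402.09014 — 3 statements merged into one kernel-verified Lean document; each statement's English description precedes it below -/
import Mathlib

section
/- Let (F_k) be a nonnegative sequence satisfying F_{k+1} ≤ F_k - (1/(2C)) F_k² with C > 0 and F_k > 0 for all k ≤ N. Then F_N ≤ 2C/N. -/
/-- The core recursion of the convex convergence proof: if `F` is nonnegative,
positive up to `N`, and satisfies `F (k+1) ≤ F k - (1/(2C)) (F k)²`, then `F N ≤ 2C/N`. -/
theorem convex_recursion_rate
    (F : ℕ → ℝ) (C : ℝ) (hC : 0 < C)
    (hnonneg : ∀ k, 0 ≤ F k)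
    (N : ℕ) (hN : 0 < N)
    (hpos : ∀ k ≤ N, 0 < F k)
    (hrec : ∀ k, F (k + 1) ≤ F k - (1 / (2 * C)) * (F k) ^ 2) :
    F N ≤ 2 * C / N := by
  have h2C : (0:ℝ) < 2 * C := by linarith
  -- key: ∀ k ≤ N, k/(2C) ≤ 1/F k
  have key : ∀ k, k ≤ N → (k : ℝ) / (2 * C) ≤ 1 / F k := by
    intro k
    induction k with
    | zero =>
      intro hk
      simp
      have := hpos 0 (le_of_lt hN)
      positivity
    | succ n ih =>
      intro hk
      have hn : n ≤ N := Nat.le_of_succ_le hk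
      have ihn := ih hn
      have hFn : 0 < F n := hpos n hn
      have hFn1 : 0 < F (n+1) := hpos (n+1) hk
      have hrecn := hrec n
      -- 1/F(n+1) - 1/F n ≥ 1/(2C)
      have hq : 0 ≤ 1 / (2*C) * F n ^ 2 := by positivity
      have hle : F (n+1) ≤ F n := by linarith
      have heq : 2*C*(F n - 1/(2*C)*F n^2) = 2*C*F n - F n^2 := by
        field_simp
      have h1 := mul_le_mul_of_nonneg_left hrecn h2C.le
      have h' : 2*C*F (n+1) ≤ 2*C*F n - F n^2 := by linarith [heq ▸ h1]
      have hstep : 1 / F n + 1 / (2*C) ≤ 1 / F (n+1) := by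
        rw [div_add_div _ _ (ne_of_gt hFn) (ne_of_gt h2C), div_le_div_iff₀ (by positivity) hFn1]
        nlinarith [mul_le_mul_of_nonneg_left hle hFn.le]
      push_cast
      calc ((n:ℝ) + 1) / (2*C) = (n:ℝ)/(2*C) + 1/(2*C) := by ring
        _ ≤ 1 / F n + 1/(2*C) := by linarith
        _ ≤ 1 / F (n+1) := hstep
  have hkey := key N le_rfl
  have hFN : 0 < F N := hpos N le_rfl
  have hNpos : (0:ℝ) < N := by exact_mod_cast hN
  rw [div_le_div_iff₀ h2C hFN] at hkey
  rw [le_div_iff₀ hNpos]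
  nlinarith [hkey]
end

section
/- Let g ∈ ℝ^d be nonzero and let e be uniformly distributed on the unit Euclidean sphere S^{d-1}. Then E[sign(⟨g, e⟩) e] = ζ g / ‖g‖ for some scalar ζ = E[|e_1|] depending only on d. -/
open MeasureTheory

section Aux

variable {d : ℕ}

local notation "E" => EuclideanSpace ℝ (Fin d)

lemma aux_meas (u : E) :
    Measurable (fun e : E => (if (0:ℝ) ≤ (inner ℝ u e : ℝ) then (1:ℝ) else -1) • e) := by
  have hset : MeasurableSet {e : E | (0:ℝ) ≤ (inner ℝ u e : ℝ)} :=
    (isClosed_le continuous_const (continuous_const.inner continuous_id)).measurableSet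
  exact ((measurable_const.ite hset measurable_const : Measurable (fun e : E => if (0:ℝ) ≤ (inner ℝ u e : ℝ) then (1:ℝ) else -1))).smul measurable_id

lemma aux_int (μ : Measure E) [IsProbabilityMeasure μ] (hsphere : ∀ᵐ e ∂μ, ‖e‖ = 1) (u : E) :
    Integrable (fun e : E => (if (0:ℝ) ≤ (inner ℝ u e : ℝ) then (1:ℝ) else -1) • e) μ := by
  refine Integrable.mono' (integrable_const 1) (aux_meas u).aestronglyMeasurable ?_
  filter_upwards [hsphere] with e he
  rw [norm_smul, he]
  split_ifs <;> simp

lemma key {d : ℕ} (hd : 0 < d) (μ : Measure (EuclideanSpace ℝ (Fin d))) [IsProbabilityMeasure μ]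
    (hsphere : ∀ᵐ e ∂μ, ‖e‖ = 1)
    (hinv : ∀ O : EuclideanSpace ℝ (Fin d) ≃ₗᵢ[ℝ] EuclideanSpace ℝ (Fin d),
      Measure.map O μ = μ)
    (u : EuclideanSpace ℝ (Fin d)) (hu : ‖u‖ = 1) :
    (∫ e, (if (0:ℝ) ≤ (inner ℝ u e : ℝ) then (1:ℝ) else -1) • e ∂μ)
      = (∫ e, |e ⟨0, hd⟩| ∂μ) • u := by
  set i0 : Fin d := ⟨0, hd⟩
  set E₀ : EuclideanSpace ℝ (Fin d) := EuclideanSpace.single i0 (1:ℝ) with hE₀def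
  have hE₀ : ‖E₀‖ = 1 := by simp [hE₀def, EuclideanSpace.norm_single]
  have hE₀e : ∀ e : EuclideanSpace ℝ (Fin d), (inner ℝ E₀ e : ℝ) = e i0 := by
    intro e; simp [hE₀def, EuclideanSpace.inner_single_left]
  -- general change of variables
  have hmap : ∀ (O : EuclideanSpace ℝ (Fin d) ≃ₗᵢ[ℝ] EuclideanSpace ℝ (Fin d))
      (f : EuclideanSpace ℝ (Fin d) → EuclideanSpace ℝ (Fin d)), Measurable f →
      ∫ e, f e ∂μ = ∫ e, f (O e) ∂μ := by
    intro O f hf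
    conv_lhs => rw [← hinv O]
    rw [integral_map O.continuous.aemeasurable]
    rw [hinv O]
    exact hf.aestronglyMeasurable
  have hcomm : ∀ (O : EuclideanSpace ℝ (Fin d) ≃ₗᵢ[ℝ] EuclideanSpace ℝ (Fin d))
      (f : EuclideanSpace ℝ (Fin d) → EuclideanSpace ℝ (Fin d)),
      ∫ e, O (f e) ∂μ = O (∫ e, f e ∂μ) := by
    intro O f
    have := O.toLinearIsometry.integral_comp_comm (μ := μ) f
    rwa [LinearIsometryEquiv.coe_toLinearIsometry] at this
  set h : EuclideanSpace ℝ (Fin d) → EuclideanSpace ℝ (Fin d) :=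
    fun e => (if (0:ℝ) ≤ (inner ℝ E₀ e : ℝ) then (1:ℝ) else -1) • e with hh
  have h_meas : Measurable h := aux_meas E₀
  have h_int : Integrable h μ := aux_int μ hsphere E₀
  set v := ∫ e, h e ∂μ with hv_def
  -- v is fixed by the reflection in the line spanned by E₀
  set R := Submodule.reflection (ℝ ∙ E₀) with hR
  have hRinner : ∀ e, (inner ℝ E₀ (R e) : ℝ) = inner ℝ E₀ e := by
    intro e
    conv_lhs => rw [← Submodule.reflection_mem_subspace_eq_self (K := (ℝ ∙ E₀)) (Submodule.mem_span_singleton_self E₀)]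
    exact R.inner_map_map E₀ e
  have hRv : R v = v := by
    conv_rhs => rw [hv_def, hmap R h h_meas]
    have he : ∀ e, h (R e) = R (h e) := by
      intro e; simp only [hh, hRinner, LinearIsometryEquiv.map_smul]
    simp_rw [he]
    exact (hcomm R h).symm
  have hvmem : v ∈ (ℝ ∙ E₀) := (Submodule.reflection_eq_self_iff v).mp hRv
  obtain ⟨c, hc⟩ := Submodule.mem_span_singleton.mp hvmem
  have hcval : c = ∫ e, |e i0| ∂μ := by
    have h1 : (inner ℝ E₀ v : ℝ) = c := by
      rw [← hc, real_inner_smul_right, real_inner_self_eq_norm_sq, hE₀]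
      ring
    rw [← h1, hv_def, ← integral_inner h_int]
    congr 1
    funext e
    rw [hh]
    simp only [real_inner_smul_right, hE₀e]
    split_ifs with hle
    · rw [abs_of_nonneg hle]; simp
    · rw [abs_of_neg (lt_of_not_ge hle)]; simp
  have hveq : v = (∫ e, |e i0| ∂μ) • E₀ := by rw [← hc, hcval]
  -- now transport to u via an isometry sending E₀ to u
  set O := Submodule.reflection (ℝ ∙ (E₀ - u))ᗮ with hO
  have hOE₀ : O E₀ = u := Submodule.reflection_sub (by rw [hE₀, hu])
  have hf : ∀ e, (if (0:ℝ) ≤ (inner ℝ u (O e) : ℝ) then (1:ℝ) else -1) • (O e) = O (h e) := by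
    intro e
    rw [hh]
    simp only [LinearIsometryEquiv.map_smul]
    congr 2
    rw [← hOE₀, O.inner_map_map]
  calc (∫ e, (if (0:ℝ) ≤ (inner ℝ u e : ℝ) then (1:ℝ) else -1) • e ∂μ)
      = ∫ e, (if (0:ℝ) ≤ (inner ℝ u (O e) : ℝ) then (1:ℝ) else -1) • (O e) ∂μ :=
        hmap O _ (aux_meas u)
    _ = ∫ e, O (h e) ∂μ := by simp_rw [hf]
    _ = O v := hcomm O h
    _ = (∫ e, |e i0| ∂μ) • u := by rw [hveq, LinearIsometryEquiv.map_smul, hOE₀]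

end Aux

/-- For `e` uniform on the unit sphere (modeled as a rotation-invariant probability
measure supported on the sphere), `E[sign(⟨g,e⟩) e] = ζ · g/‖g‖` with `ζ = E[|e₁|]`. -/
theorem expectation_sign_inner_smul_eq
    {d : ℕ} (hd : 0 < d)
    (μ : Measure (EuclideanSpace ℝ (Fin d))) [IsProbabilityMeasure μ]
    (hsphere : ∀ᵐ e ∂μ, ‖e‖ = 1)
    (hinv : ∀ O : EuclideanSpace ℝ (Fin d) ≃ₗᵢ[ℝ] EuclideanSpace ℝ (Fin d),
      Measure.map O μ = μ)
    (g : EuclideanSpace ℝ (Fin d)) (hg : g ≠ 0) :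
    (∫ e, (if (0:ℝ) ≤ (inner ℝ g e : ℝ) then (1:ℝ) else -1) • e ∂μ)
      = (∫ e, |e ⟨0, hd⟩| ∂μ) • (‖g‖⁻¹ • g) := by
  have hg' : (0:ℝ) < ‖g‖ := norm_pos_iff.mpr hg
  set u : EuclideanSpace ℝ (Fin d) := ‖g‖⁻¹ • g with hu_def
  have hu : ‖u‖ = 1 := by
    rw [hu_def, norm_smul, norm_inv, norm_norm, inv_mul_cancel₀ hg'.ne']
  have hcond : ∀ e : EuclideanSpace ℝ (Fin d),
      ((0:ℝ) ≤ (inner ℝ g e : ℝ)) ↔ ((0:ℝ) ≤ (inner ℝ u e : ℝ)) := by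
    intro e
    have hge : (inner ℝ u e : ℝ) = ‖g‖⁻¹ * (inner ℝ g e : ℝ) := by
      rw [hu_def, real_inner_smul_left]
    rw [hge]
    constructor
    · intro hle; positivity
    · intro hle
      have := mul_le_mul_of_nonneg_left hle (le_of_lt hg')
      rwa [mul_zero, ← mul_assoc, mul_inv_cancel₀ hg'.ne', one_mul] at this
  have : (fun e : EuclideanSpace ℝ (Fin d) =>
      (if (0:ℝ) ≤ (inner ℝ g e : ℝ) then (1:ℝ) else -1) • e)
      = fun e => (if (0:ℝ) ≤ (inner ℝ u e : ℝ) then (1:ℝ) else -1) • e := by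
    funext e; rw [if_congr (hcond e) rfl rfl]
  rw [this]
  exact key hd μ hsphere hinv u hu
end

section
/- Let A_{k+1} = A_k + a_{k+1} and B_{k+1} = B_k + μ a_{k+1} with A_0 = 0, B_0 = 1, μ > 0, and a_{k+1} determined by a_{k+1}² S² = A_{k+1} B_{k+1} for a constant S > 0. Then A_N ≥ (1/(4μ)) [(1+γ)^N - (1-γ)^N]² where γ = √μ/(2S). -/
set_option maxHeartbeats 1000000 in
private lemma accel_aux_step (γ pk qk α αk : ℝ) (hγ0 : 0 < γ)
    (hpk : 0 ≤ pk) (hqk : 1 / 2 ≤ qk)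
    (hQ2 : (qk + γ * pk) ^ 2 ≤ (pk + γ * qk) ^ 2 + 1)
    (hα : 0 < α) (hμa : 0 < α - αk)
    (hrel : (α - αk) ^ 2 = 4 * γ ^ 2 * α * (α + 1))
    (ih : pk ^ 2 ≤ αk) :
    (pk + γ * qk) ^ 2 ≤ α := by
  obtain ⟨u, hu0, hu2⟩ : ∃ u : ℝ, 0 < u ∧ u ^ 2 = α :=
    ⟨Real.sqrt α, Real.sqrt_pos.2 hα, Real.sq_sqrt hα.le⟩
  obtain ⟨v, hv0, hv2⟩ : ∃ v : ℝ, 0 < v ∧ v ^ 2 = α + 1 :=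
    ⟨Real.sqrt (α + 1), Real.sqrt_pos.2 (by linarith), Real.sq_sqrt (by linarith)⟩
  have hE : α - αk = 2 * γ * (u * v) := by
    have h3 : 0 ≤ 2 * γ * (u * v) := by positivity
    have h4 : (α - αk) ^ 2 = (2 * γ * (u * v)) ^ 2 := by
      rw [hrel]
      linear_combination (-4 * γ ^ 2 * v ^ 2) * hu2 + (-4 * γ ^ 2 * α) * hv2
    calc α - αk = Real.sqrt ((α - αk) ^ 2) := (Real.sqrt_sq hμa.le).symm
      _ = Real.sqrt ((2 * γ * (u * v)) ^ 2) := by rw [h4]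
      _ = 2 * γ * (u * v) := Real.sqrt_sq h3
  have hH : pk ^ 2 ≤ u ^ 2 - 2 * γ * (u * v) := by
    rw [hu2]; linarith
  have hreg : 2 * γ * v ≤ u := by
    nlinarith [hH, sq_nonneg pk, hu0]
  by_contra hcon
  push_neg at hcon
  set P := pk + γ * qk with hPdef
  set Q := qk + γ * pk with hQdef
  clear_value P Q
  have hP0 : 0 < P := by
    rw [hPdef]; nlinarith [hγ0, hpk, hqk]
  have huP : u < P := by nlinarith [hu2, hcon, hu0, hP0]
  obtain ⟨w, hw0, hw2⟩ : ∃ w : ℝ, 0 < w ∧ w ^ 2 = P ^ 2 + 1 :=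
    ⟨Real.sqrt (P ^ 2 + 1), Real.sqrt_pos.2 (by positivity), Real.sq_sqrt (by positivity)⟩
  have hsqr : (2 * γ * v) ^ 2 ≤ u ^ 2 := by
    have := mul_self_nonneg (2 * γ * v)
    nlinarith [hreg, hu0, hv0, hγ0]
  have hsqr' : 4 * γ ^ 2 * (u ^ 2 + 1) ≤ u ^ 2 := by
    nlinarith [hsqr, hv2]
  have h4γ : 4 * γ ^ 2 < 1 := by
    nlinarith [hsqr', sq_nonneg u, hγ0]
  have hPreg : 2 * γ * w ≤ P := by
    have huP2 : u ^ 2 ≤ P ^ 2 := by nlinarith [huP, hu0]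
    have h1 : (2 * γ * w) ^ 2 ≤ P ^ 2 := by
      nlinarith [hsqr', huP2, h4γ, hw2]
    nlinarith [h1, hP0, hw0, hγ0]
  have hQw : Q ≤ w := by
    have hQ0 : 0 ≤ Q := by rw [hQdef]; nlinarith [hγ0, hpk, hqk]
    nlinarith [hQ2, hw2, hQ0, hw0]
  have hchain : P ^ 2 - 2 * γ * (P * Q) ≤ pk ^ 2 := by
    rw [hPdef, hQdef]
    nlinarith [hpk, hqk, hγ0, mul_nonneg hpk (by linarith : (0:ℝ) ≤ qk),
      sq_nonneg pk, sq_nonneg qk, pow_pos hγ0 2, pow_pos hγ0 3,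
      mul_nonneg (mul_nonneg hγ0.le hγ0.le) (mul_nonneg hpk (by linarith : (0:ℝ) ≤ qk))]
  have hchain2 : P ^ 2 - 2 * γ * (P * w) ≤ u ^ 2 - 2 * γ * (u * v) := by
    have hQP : 2 * γ * (P * Q) ≤ 2 * γ * (P * w) := by
      have h := mul_le_mul_of_nonneg_left hQw (by positivity : (0:ℝ) ≤ 2 * γ * P)
      linarith [h]
    linarith
  have hx : 2 * γ * (P ^ 2 + 1) ≤ P * w := by
    nlinarith [hPreg, hw0, hw2]
  have hy : 2 * γ * (u ^ 2 + 1) ≤ u * v := by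
    nlinarith [hreg, hv0, hv2]
  have hid : (P * w - u * v) * (P * w + u * v) = (P ^ 2 - u ^ 2) * (P ^ 2 + u ^ 2 + 1) := by
    have e : (P * w - u * v) * (P * w + u * v) = P ^ 2 * w ^ 2 - u ^ 2 * v ^ 2 := by ring
    rw [e, hw2, hv2, ← hu2]
    ring
  have hT : 0 < P ^ 2 - u ^ 2 := by nlinarith [huP, hu0, hP0]
  have hD : 0 < P * w + u * v := by positivity
  have hstep1 : (P ^ 2 - u ^ 2) * (P * w + u * v)
      ≤ (2 * γ * (P * w - u * v)) * (P * w + u * v) := by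
    apply mul_le_mul_of_nonneg_right _ hD.le
    linarith
  have hstep2 : (2 * γ * (P * w - u * v)) * (P * w + u * v)
      = 2 * γ * ((P ^ 2 - u ^ 2) * (P ^ 2 + u ^ 2 + 1)) := by
    linear_combination 2 * γ * hid
  have hstep3 : (P ^ 2 - u ^ 2) * (2 * γ * (P ^ 2 + u ^ 2 + 2))
      ≤ (P ^ 2 - u ^ 2) * (P * w + u * v) := by
    apply mul_le_mul_of_nonneg_left _ hT.le
    linarith
  nlinarith [hstep1, hstep2, hstep3, hT, hγ0, mul_pos hγ0 hT]

set_option maxHeartbeats 1000000 in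
/-- Growth estimate for the parameter sequence of Nesterov's accelerated coordinate
descent: `A_N ≥ (1/(4μ)) [(1+γ)^N - (1-γ)^N]²` with `γ = √μ/(2S)`. -/
theorem accelerated_parameter_growth
    (A B a : ℕ → ℝ) (μ S : ℝ) (hμ : 0 < μ) (hS : 0 < S)
    (hμS : Real.sqrt μ ≤ S)
    (hA0 : A 0 = 0) (hB0 : B 0 = 1)
    (ha_pos : ∀ k, 0 < a (k + 1))
    (hA : ∀ k, A (k + 1) = A k + a (k + 1))
    (hB : ∀ k, B (k + 1) = B k + μ * a (k + 1))
    (ha : ∀ k, (a (k + 1)) ^ 2 * S ^ 2 = A (k + 1) * B (k + 1)) :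
    ∀ N : ℕ, A N ≥ (1 / (4 * μ)) *
      ((1 + Real.sqrt μ / (2 * S)) ^ N - (1 - Real.sqrt μ / (2 * S)) ^ N) ^ 2 := by
  set γ : ℝ := Real.sqrt μ / (2 * S) with hγdef
  have hsμ : 0 < Real.sqrt μ := Real.sqrt_pos.2 hμ
  have hγ0 : 0 < γ := div_pos hsμ (by linarith)
  have hγh : γ ≤ 1 / 2 := by
    rw [hγdef, div_le_iff₀ (by linarith : (0:ℝ) < 2 * S)]
    linarith
  have hsq : Real.sqrt μ ^ 2 = μ := Real.sq_sqrt hμ.le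
  have hγsq : 4 * γ ^ 2 * S ^ 2 = μ := by
    rw [hγdef, div_pow]
    field_simp
    linarith [hsq]
  -- B k = 1 + μ A k
  have hBA : ∀ k, B k = 1 + μ * A k := by
    intro k
    induction k with
    | zero => simp [hB0, hA0]
    | succ n ih => rw [hB n, hA n, ih]; ring
  have hAnn : ∀ k, 0 ≤ A k := by
    intro k
    induction k with
    | zero => simp [hA0]
    | succ n ih => rw [hA n]; linarith [ha_pos n]
  have hpow : ∀ k : ℕ, (0:ℝ) ≤ (1 - γ) ^ k ∧ (1 - γ) ^ k ≤ (1 + γ) ^ k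
      ∧ (1:ℝ) ≤ (1 + γ) ^ k := by
    intro k
    refine ⟨pow_nonneg (by linarith) k, pow_le_pow_left₀ (by linarith) (by linarith) k, ?_⟩
    calc (1:ℝ) = 1 ^ k := (one_pow k).symm
    _ ≤ (1 + γ) ^ k := pow_le_pow_left₀ (by norm_num) (by linarith) k
  have hp0 : ∀ k : ℕ, 0 ≤ ((1 + γ) ^ k - (1 - γ) ^ k) / 2 := by
    intro k; linarith [(hpow k).2.1]
  have hqhalf : ∀ k : ℕ, 1 / 2 ≤ ((1 + γ) ^ k + (1 - γ) ^ k) / 2 := by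
    intro k; linarith [(hpow k).1, (hpow k).2.2]
  have hqp : ∀ k : ℕ, (((1 + γ) ^ k + (1 - γ) ^ k) / 2) ^ 2
      = (((1 + γ) ^ k - (1 - γ) ^ k) / 2) ^ 2 + (1 - γ ^ 2) ^ k := by
    intro k
    have hxy : (1 - γ ^ 2) ^ k = (1 + γ) ^ k * (1 - γ) ^ k := by
      rw [← mul_pow]; congr 1; ring
    rw [hxy]; ring
  have hgpow : ∀ k : ℕ, (1 - γ ^ 2) ^ k ≤ 1 := by
    intro k
    apply pow_le_one₀
    · nlinarith [hγh, hγ0]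
    · nlinarith [hγ0]
  -- main induction
  have main : ∀ k : ℕ, (((1 + γ) ^ k - (1 - γ) ^ k) / 2) ^ 2 ≤ μ * A k := by
    intro k
    induction k with
    | zero => simp [hA0]
    | succ k ih =>
      have hApos : 0 < A (k + 1) := by
        rw [hA k]; linarith [ha_pos k, hAnn k]
      have hα : 0 < μ * A (k + 1) := mul_pos hμ hApos
      have hrel : (μ * A (k + 1) - μ * A k) ^ 2
          = 4 * γ ^ 2 * (μ * A (k + 1)) * (μ * A (k + 1) + 1) := by
        have h1 := ha k
        rw [hBA (k + 1)] at h1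
        have haa : A (k + 1) - A k = a (k + 1) := by linarith [hA k]
        have hkey : (μ * A (k + 1) - μ * A k) ^ 2 * S ^ 2
            = μ * (μ * A (k + 1)) * (μ * A (k + 1) + 1) := by
          have hμa : μ * A (k + 1) - μ * A k = μ * a (k + 1) := by
            rw [← haa]; ring
          rw [hμa]
          linear_combination μ ^ 2 * h1
        have hS2 : (S:ℝ) ^ 2 ≠ 0 := by positivity
        have h2 : (μ * A (k + 1) - μ * A k) ^ 2 * S ^ 2
            = (4 * γ ^ 2 * (μ * A (k + 1)) * (μ * A (k + 1) + 1)) * S ^ 2 := by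
          rw [hkey]
          linear_combination (μ * A (k + 1) * (μ * A (k + 1) + 1)) * hγsq.symm
        exact mul_right_cancel₀ hS2 h2
      have hμa : 0 < μ * A (k + 1) - μ * A k := by
        have h2 := hA k
        have h3 : μ * A (k + 1) - μ * A k = μ * a (k + 1) := by rw [h2]; ring
        rw [h3]; exact mul_pos hμ (ha_pos k)
      have hQ2 : (((1 + γ) ^ k + (1 - γ) ^ k) / 2
            + γ * (((1 + γ) ^ k - (1 - γ) ^ k) / 2)) ^ 2
          ≤ (((1 + γ) ^ k - (1 - γ) ^ k) / 2
            + γ * (((1 + γ) ^ k + (1 - γ) ^ k) / 2)) ^ 2 + 1 := by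
        have h1 := hqp (k + 1)
        have h2 := hgpow (k + 1)
        have e1 : ((1 + γ) ^ (k+1) + (1 - γ) ^ (k+1)) / 2
            = ((1 + γ) ^ k + (1 - γ) ^ k) / 2 + γ * (((1 + γ) ^ k - (1 - γ) ^ k) / 2) := by
          simp only [pow_succ]; ring
        have e2 : ((1 + γ) ^ (k+1) - (1 - γ) ^ (k+1)) / 2
            = ((1 + γ) ^ k - (1 - γ) ^ k) / 2 + γ * (((1 + γ) ^ k + (1 - γ) ^ k) / 2) := by
          simp only [pow_succ]; ring
        rw [e1, e2] at h1
        linarith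
      have hstep := accel_aux_step γ (((1 + γ) ^ k - (1 - γ) ^ k) / 2)
        (((1 + γ) ^ k + (1 - γ) ^ k) / 2) (μ * A (k + 1)) (μ * A k)
        hγ0 (hp0 k) (hqhalf k) hQ2 hα hμa hrel ih
      have e2 : ((1 + γ) ^ (k+1) - (1 - γ) ^ (k+1)) / 2
          = ((1 + γ) ^ k - (1 - γ) ^ k) / 2 + γ * (((1 + γ) ^ k + (1 - γ) ^ k) / 2) := by
        simp only [pow_succ]; ring
      rw [e2]
      exact hstep
  -- conclusion
  intro N
  have h := main N
  rw [ge_iff_le,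
    show (1 / (4 * μ)) * ((1 + γ) ^ N - (1 - γ) ^ N) ^ 2
      = ((((1 + γ) ^ N - (1 - γ) ^ N) / 2) ^ 2) / μ by ring,
    div_le_iff₀ hμ]
  linarith [h]
end
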